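/- arXiv:1511.03483 — 5 statements merged into one kernel-verified Lean document; each statement's English description precedes it below -/
import Mathlib

section
/- Let R be an L×L real non-singular upper triangular matrix with pairwise distinct diagonal entries, and let p_{i,j,k} denote its power factors. Fix t ≥ 1. If the entries of the matrix power R^t satisfy (R^t)_{i,j} = Σ_{k=i}^{j} p_{i,j,k} (r_{k,k})^{t-1} for all 1 ≤ i ≤ j ≤ L, then the entries of R^{t+1} satisfy (R^{t+1})_{i,j} = Σ_{k=i}^{j} p_{i,j,k} (r_{k,k})^{t} for all 1 ≤ i ≤ j ≤ L. -/
open Matrix Finset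

/-- The power factors `p i j k` of a matrix with entries `r i j`
(indices `1, …, L`), defined recursively by: `p j j j = r j j`;
`p i j k = 0` if `k < i` or `k > j`;
`p i j k = (∑ l = k to j-1, p i l k * r l j) / (r k k - r j j)` for `i ≤ k < j`;
`p i j j = r i j - ∑ l = i to j-1, p i j l` for `i < j`. -/
noncomputable def powerFactor (r : ℕ → ℕ → ℝ) : ℕ → ℕ → ℕ → ℝ
  | i, j, k =>
    if _h0 : k < i ∨ j < k then 0
    else if _h1 : k < j then
      (∑ l ∈ (Finset.Icc k (j - 1)).attach,
        powerFactor r i l.1 k * r l.1 j) / (r k k - r j j)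
    else if _h2 : i < j then
      r i j - ∑ l ∈ (Finset.Icc i (j - 1)).attach, powerFactor r i j l.1
    else r j j
termination_by i j k => (j, k)
decreasing_by
  · have := Finset.mem_Icc.mp l.2
    exact Prod.Lex.left _ _ (by omega)
  · have := Finset.mem_Icc.mp l.2
    exact Prod.Lex.right _ (by omega)

lemma pow_tri_aux {L t : ℕ} {R : Matrix (Fin L) (Fin L) ℝ}
    (h : ∀ a b : Fin L, b < a → R a b = 0) :
    ∀ a b : Fin L, b < a → (R ^ t) a b = 0 := by
  induction t with
  | zero =>
    intro a b hba
    simp [pow_zero, Matrix.one_apply, Fin.ne_of_gt hba]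
  | succ n ih =>
    intro a b hba
    rw [pow_succ, Matrix.mul_apply]
    apply Finset.sum_eq_zero
    intro c _
    rcases lt_or_ge c a with hc | hc
    · rw [ih a c hc, zero_mul]
    · rw [h c b (lt_of_lt_of_le hba hc), mul_zero]

lemma key_aux (L : ℕ) (r : ℕ → ℕ → ℝ)
    (hdist : ∀ i j, 1 ≤ i → i ≤ L → 1 ≤ j → j ≤ L → i ≠ j → r i i ≠ r j j)
    (i k b : ℕ) (h1 : 1 ≤ i) (hik : i ≤ k) (hkb : k ≤ b) (hbL : b ≤ L) :
    ∑ c ∈ Finset.Icc k b, powerFactor r i c k * r c b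
      = powerFactor r i b k * r k k := by
  rcases eq_or_lt_of_le hkb with rfl | hkb'
  · simp
  · obtain ⟨m, rfl⟩ : ∃ m, b = m + 1 := ⟨b - 1, by omega⟩
    have hp : powerFactor r i (m + 1) k
        = (∑ l ∈ Finset.Icc k m, powerFactor r i l k * r l (m + 1))
            / (r k k - r (m + 1) (m + 1)) := by
      rw [powerFactor, dif_neg (by omega), dif_pos (by omega)]
      rw [Finset.sum_attach (Finset.Icc k ((m + 1) - 1))
        (fun l => powerFactor r i l k * r l (m + 1))]
      norm_num
    have hne : r k k - r (m + 1) (m + 1) ≠ 0 :=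
      sub_ne_zero.mpr (hdist k (m + 1) (by omega) (by omega) (by omega) (by omega) (by omega))
    have hsum : ∑ l ∈ Finset.Icc k m, powerFactor r i l k * r l (m + 1)
        = powerFactor r i (m + 1) k * (r k k - r (m + 1) (m + 1)) := by
      rw [hp]; field_simp
    rw [Finset.sum_Icc_succ_top (by omega), hsum]
    ring

/-- Lemma 1.2: Let `R` be an `L × L` real non-singular upper
triangular matrix (entries `r i j`, indices `1, …, L`) with pairwise distinct
(nonzero) diagonal entries, and let `p = powerFactor r` be its power factors.
Fix `t ≥ 1`.  If `(R^t)_{i,j} = ∑_{k=i}^{j} p i j k * (r k k)^(t-1)` for all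
`1 ≤ i ≤ j ≤ L`, then `(R^{t+1})_{i,j} = ∑_{k=i}^{j} p i j k * (r k k)^t`
for all `1 ≤ i ≤ j ≤ L`. -/
theorem power_factor_induction_step
    (L : ℕ) (hL : 1 ≤ L) (r : ℕ → ℕ → ℝ)
    (htri : ∀ i j, 1 ≤ i → i ≤ L → 1 ≤ j → j ≤ L → j < i → r i j = 0)
    (hnonsing : ∀ i, 1 ≤ i → i ≤ L → r i i ≠ 0)
    (hdist : ∀ i j, 1 ≤ i → i ≤ L → 1 ≤ j → j ≤ L → i ≠ j → r i i ≠ r j j)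
    (R : Matrix (Fin L) (Fin L) ℝ)
    (hR : R = Matrix.of fun a b : Fin L => r (a.val + 1) (b.val + 1))
    (t : ℕ) (ht : 1 ≤ t)
    (hind : ∀ a b : Fin L, a ≤ b →
      (R ^ t) a b = ∑ k ∈ Finset.Icc (a.val + 1) (b.val + 1),
        powerFactor r (a.val + 1) (b.val + 1) k * (r k k) ^ (t - 1)) :
    ∀ a b : Fin L, a ≤ b →
      (R ^ (t + 1)) a b = ∑ k ∈ Finset.Icc (a.val + 1) (b.val + 1),
        powerFactor r (a.val + 1) (b.val + 1) k * (r k k) ^ t := by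
  intro a b hab
  have haval : a.val ≤ b.val := hab
  have hRtri : ∀ c d : Fin L, d < c → R c d = 0 := by
    intro c d hdc
    rw [hR]
    exact htri (c.val + 1) (d.val + 1) (by omega) (by omega) (by omega) (by omega)
      (by exact Nat.add_lt_add_right hdc 1)
  rw [pow_succ, Matrix.mul_apply]
  have stepA : ∑ c : Fin L, (R ^ t) a c * R c b
      = ∑ c ∈ Finset.Icc a b, (R ^ t) a c * R c b := by
    symm
    apply Finset.sum_subset (Finset.subset_univ _)
    intro c _ hc
    rw [Finset.mem_Icc, not_and_or] at hc
    rcases hc with hc | hc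
    · rw [pow_tri_aux hRtri a c (lt_of_not_ge hc), zero_mul]
    · rw [hRtri c b (lt_of_not_ge hc), mul_zero]
  rw [stepA]
  set G : ℕ → ℝ := fun m =>
    (∑ k ∈ Finset.Icc (a.val + 1) (m + 1),
      powerFactor r (a.val + 1) (m + 1) k * r k k ^ (t - 1)) * r (m + 1) (b.val + 1) with hG
  have stepB : ∀ c ∈ Finset.Icc a b, (R ^ t) a c * R c b = G c.val := by
    intro c hc
    rw [Finset.mem_Icc] at hc
    rw [hind a c hc.1, hR, hG]
    rfl
  rw [Finset.sum_congr rfl stepB]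
  have stepC : ∑ c ∈ Finset.Icc a b, G c.val = ∑ m ∈ Finset.Icc a.val b.val, G m := by
    rw [← Fin.map_valEmbedding_Icc, Finset.sum_map]
    rfl
  rw [stepC]
  have stepD : ∑ m ∈ Finset.Icc a.val b.val, G m
      = ∑ c ∈ Finset.Icc (a.val + 1) (b.val + 1), G (c - 1) := by
    rw [← Finset.map_add_right_Icc a.val b.val 1, Finset.sum_map]
    apply Finset.sum_congr rfl
    intro m _
    simp [addRightEmbedding_apply]
  rw [stepD]
  have stepE : ∀ c ∈ Finset.Icc (a.val + 1) (b.val + 1), G (c - 1)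
      = ∑ k ∈ Finset.Icc (a.val + 1) c,
          powerFactor r (a.val + 1) c k * r k k ^ (t - 1) * r c (b.val + 1) := by
    intro c hc
    rw [Finset.mem_Icc] at hc
    have : c - 1 + 1 = c := by omega
    rw [hG]
    simp only [this]
    rw [Finset.sum_mul]
  rw [Finset.sum_congr rfl stepE]
  rw [Finset.sum_comm' (t' := Finset.Icc (a.val + 1) (b.val + 1))
    (s' := fun k => Finset.Icc k (b.val + 1))
    (by intro c k; simp only [Finset.mem_Icc]; omega)]
  apply Finset.sum_congr rfl
  intro k hk
  rw [Finset.mem_Icc] at hk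
  have inner : ∑ c ∈ Finset.Icc k (b.val + 1),
      powerFactor r (a.val + 1) c k * r k k ^ (t - 1) * r c (b.val + 1)
      = r k k ^ (t - 1) * ∑ c ∈ Finset.Icc k (b.val + 1),
          powerFactor r (a.val + 1) c k * r c (b.val + 1) := by
    rw [Finset.mul_sum]
    apply Finset.sum_congr rfl
    intro c _
    ring
  rw [inner, key_aux L r hdist (a.val + 1) k (b.val + 1) (by omega) hk.1 hk.2 (by omega)]
  have : r k k ^ (t - 1) * (powerFactor r (a.val + 1) (b.val + 1) k * r k k)
      = powerFactor r (a.val + 1) (b.val + 1) k * (r k k ^ (t - 1) * r k k) := by ring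
  rw [this, ← pow_succ]
  congr 2
  omega
end

section
/- Let R be an L×L real non-singular upper triangular matrix with pairwise distinct diagonal entries, and let p_{i,j,k} denote its power factors. Then for every integer t ≥ 1 and all indices 1 ≤ i ≤ j ≤ L, the (i,j) entry of the matrix power R^t equals Σ_{k=i}^{j} p_{i,j,k} (r_{k,k})^{t-1}. -/
open Matrix Finset

lemma powerFactor_zero (r : ℕ → ℕ → ℝ) {i j k : ℕ} (h : k < i ∨ j < k) :
    powerFactor r i j k = 0 := by
  rw [powerFactor]; rw [dif_pos h]

lemma powerFactor_diag (r : ℕ → ℕ → ℝ) (j : ℕ) : powerFactor r j j j = r j j := by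
  rw [powerFactor, dif_neg (by omega), dif_neg (by omega), dif_neg (by omega)]

lemma powerFactor_rec (r : ℕ → ℕ → ℝ) {i j k : ℕ} (h1 : i ≤ k) (h2 : k < j) :
    powerFactor r i j k =
      (∑ l ∈ Finset.Icc k (j - 1), powerFactor r i l k * r l j) / (r k k - r j j) := by
  rw [powerFactor, dif_neg (by omega), dif_pos h2]
  congr 1
  exact Finset.sum_attach (Finset.Icc k (j-1)) (fun l => powerFactor r i l k * r l j)

lemma powerFactor_top (r : ℕ → ℕ → ℝ) {i j : ℕ} (h : i < j) :
    powerFactor r i j j = r i j - ∑ l ∈ Finset.Icc i (j - 1), powerFactor r i j l := by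
  rw [powerFactor, dif_neg (by omega), dif_neg (by omega), dif_pos h]
  congr 1
  exact Finset.sum_attach (Finset.Icc i (j-1)) (fun l => powerFactor r i j l)

lemma powerFactor_sum (r : ℕ → ℕ → ℝ) {i j : ℕ} (h1 : 1 ≤ i) (h2 : i ≤ j) :
    ∑ k ∈ Finset.Icc i j, powerFactor r i j k = r i j := by
  rcases eq_or_lt_of_le h2 with rfl | h
  · simp [powerFactor_diag]
  · have hj : j - 1 + 1 = j := by omega
    have := powerFactor_top r h
    rw [← hj, Finset.sum_Icc_succ_top (by omega), hj, this]
    ring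

lemma powerFactor_eig (r : ℕ → ℕ → ℝ) (L : ℕ)
    (hdist : ∀ i j, 1 ≤ i → i ≤ L → 1 ≤ j → j ≤ L → i ≠ j → r i i ≠ r j j)
    {i j k : ℕ} (h1 : 1 ≤ i) (h2 : i ≤ k) (h3 : k ≤ j) (h4 : j ≤ L) :
    ∑ l ∈ Finset.Icc k j, powerFactor r i l k * r l j = powerFactor r i j k * r k k := by
  rcases eq_or_lt_of_le h3 with rfl | h
  · simp
  · have hj : j - 1 + 1 = j := by omega
    have hd : r k k - r j j ≠ 0 :=
      sub_ne_zero.mpr (hdist k j (by omega) (by omega) (by omega) h4 (by omega))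
    have hS : ∑ l ∈ Finset.Icc k (j-1), powerFactor r i l k * r l j
        = powerFactor r i j k * (r k k - r j j) := by
      rw [powerFactor_rec r h2 h, div_mul_cancel₀ _ hd]
    rw [← hj, Finset.sum_Icc_succ_top (by omega), hj, hS]
    ring

lemma fin_sum_val {L : ℕ} (a b : Fin L) (f : ℕ → ℝ) :
    ∑ c ∈ Finset.Icc a b, f c.val = ∑ m ∈ Finset.Icc a.val b.val, f m := by
  rw [← Fin.map_valEmbedding_Icc, Finset.sum_map]
  rfl

lemma nat_sum_shift (a b : ℕ) (f : ℕ → ℝ) :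
    ∑ l ∈ Finset.Icc (a+1) (b+1), f l = ∑ m ∈ Finset.Icc a b, f (m+1) := by
  rw [← Finset.map_add_right_Icc, Finset.sum_map]
  rfl

lemma fin_sum_shift {L : ℕ} (a b : Fin L) (f : ℕ → ℝ) :
    ∑ c ∈ Finset.Icc a b, f (c.val + 1) = ∑ l ∈ Finset.Icc (a.val+1) (b.val+1), f l :=
  (fin_sum_val a b (fun m => f (m+1))).trans (nat_sum_shift a.val b.val f).symm

lemma pow_tri {L : ℕ} (R : Matrix (Fin L) (Fin L) ℝ)
    (h : ∀ a c : Fin L, c < a → R a c = 0) :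
    ∀ t : ℕ, ∀ a c : Fin L, c < a → (R ^ t) a c = 0 := by
  intro t
  induction t with
  | zero =>
    intro a c hc
    rw [pow_zero]
    exact Matrix.one_apply_ne (ne_of_lt hc).symm
  | succ t ih =>
    intro a c hc
    rw [pow_succ, Matrix.mul_apply]
    apply Finset.sum_eq_zero
    intro d _
    rcases lt_or_ge d a with hd | hd
    · rw [ih a d hd, zero_mul]
    · rw [h d c (lt_of_lt_of_le hc hd), mul_zero]

/-- Theorem 1.3: Let `R` be an `L × L` real non-singular
upper triangular matrix (entries `r i j`, indices `1, …, L`) with pairwise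
distinct (nonzero) diagonal entries, and let `p = powerFactor r` be its power
factors.  Then for every `t ≥ 1` and all `1 ≤ i ≤ j ≤ L`,
`(R^t)_{i,j} = ∑_{k=i}^{j} p i j k * (r k k)^(t-1)`. -/
theorem power_factor_matrix_power
    (L : ℕ) (hL : 1 ≤ L) (r : ℕ → ℕ → ℝ)
    (htri : ∀ i j, 1 ≤ i → i ≤ L → 1 ≤ j → j ≤ L → j < i → r i j = 0)
    (hnonsing : ∀ i, 1 ≤ i → i ≤ L → r i i ≠ 0)
    (hdist : ∀ i j, 1 ≤ i → i ≤ L → 1 ≤ j → j ≤ L → i ≠ j → r i i ≠ r j j)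
    (R : Matrix (Fin L) (Fin L) ℝ)
    (hR : R = Matrix.of fun a b : Fin L => r (a.val + 1) (b.val + 1)) :
    ∀ t : ℕ, 1 ≤ t → ∀ a b : Fin L, a ≤ b →
      (R ^ t) a b = ∑ k ∈ Finset.Icc (a.val + 1) (b.val + 1),
        powerFactor r (a.val + 1) (b.val + 1) k * (r k k) ^ (t - 1) := by
  have htri' : ∀ a c : Fin L, c < a → R a c = 0 := by
    intro a c hc
    have ha := a.isLt
    have hc' := c.isLt
    have hlt : c.val < a.val := hc
    rw [hR]
    exact htri _ _ (by omega) (by omega) (by omega) (by omega) (by omega)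
  intro t ht
  induction t, ht using Nat.le_induction with
  | base =>
    intro a b hab
    have ha := a.isLt
    have hb := b.isLt
    have habv : a.val ≤ b.val := hab
    rw [pow_one, hR]
    simp only [Matrix.of_apply, Nat.sub_self, pow_zero, mul_one]
    exact (powerFactor_sum r (i := a.val+1) (j := b.val+1) (by omega) (by omega)).symm
  | succ t ht ih =>
    intro a b hab
    have ha := a.isLt
    have hb := b.isLt
    have habv : a.val ≤ b.val := hab
    rw [pow_succ, Matrix.mul_apply]
    have hz : ∀ c ∈ Finset.univ, c ∉ Finset.Icc a b → (R ^ t) a c * R c b = 0 := by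
      intro c _ hcn
      rw [Finset.mem_Icc, not_and_or] at hcn
      rcases hcn with hcn | hcn
      · rw [pow_tri R htri' t a c (lt_of_not_ge hcn), zero_mul]
      · have hbc : b < c := lt_of_not_ge hcn
        have hbc' : b.val < c.val := hbc
        have hc' := c.isLt
        have : R c b = 0 := by
          rw [hR]
          exact htri _ _ (by omega) (by omega) (by omega) (by omega) (by omega)
        rw [this, mul_zero]
    rw [← Finset.sum_subset (Finset.subset_univ (Finset.Icc a b)) hz]
    have step2 : ∀ c ∈ Finset.Icc a b, (R ^ t) a c * R c b
        = (∑ k ∈ Finset.Icc (a.val+1) (b.val+1),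
            powerFactor r (a.val+1) (c.val+1) k * r k k ^ (t-1)) * r (c.val+1) (b.val+1) := by
      intro c hcm
      rw [Finset.mem_Icc] at hcm
      have hc1 : a.val ≤ c.val := hcm.1
      have hc2 : c.val ≤ b.val := hcm.2
      rw [ih a c hcm.1, hR]
      simp only [Matrix.of_apply]
      congr 1
      apply Finset.sum_subset
      · intro k hk
        rw [Finset.mem_Icc] at hk ⊢
        omega
      · intro k hk hk'
        rw [Finset.mem_Icc] at hk hk'
        rw [powerFactor_zero r (Or.inr (by omega)), zero_mul]
    rw [Finset.sum_congr rfl step2]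
    simp only [Finset.sum_mul]
    rw [Finset.sum_comm]
    apply Finset.sum_congr rfl
    intro k hk
    rw [Finset.mem_Icc] at hk
    have hre : ∀ c ∈ Finset.Icc a b,
        powerFactor r (a.val+1) (c.val+1) k * r k k ^ (t-1) * r (c.val+1) (b.val+1)
        = (powerFactor r (a.val+1) (c.val+1) k * r (c.val+1) (b.val+1)) * r k k ^ (t-1) := by
      intro c _
      ring
    rw [Finset.sum_congr rfl hre, ← Finset.sum_mul]
    rw [fin_sum_shift a b (fun l => powerFactor r (a.val+1) l k * r l (b.val+1))]
    have hrestr : ∑ l ∈ Finset.Icc (a.val+1) (b.val+1),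
          powerFactor r (a.val+1) l k * r l (b.val+1)
        = ∑ l ∈ Finset.Icc k (b.val+1), powerFactor r (a.val+1) l k * r l (b.val+1) := by
      symm
      apply Finset.sum_subset
      · intro l hl
        rw [Finset.mem_Icc] at hl ⊢
        omega
      · intro l hl hl'
        rw [Finset.mem_Icc] at hl hl'
        rw [powerFactor_zero r (Or.inr (by omega)), zero_mul]
    rw [hrestr, powerFactor_eig r L hdist (by omega) hk.1 hk.2 (by omega)]
    rw [Nat.add_sub_cancel, mul_assoc, ← pow_succ']
    have htt : t - 1 + 1 = t := by omega
    rw [htt]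
end

section
/- Let R be an L×L real non-singular upper triangular matrix with pairwise distinct diagonal entries, let p_{i,j,k} denote its power factors, let e, q₀ ∈ ℝ^L, let f_opt > 0, and define the relative approximation error E_t := (eᵀ R^t q₀)/f_opt and the coefficients c_k := (Σ_{i=1}^{L} Σ_{j=i}^{L} e_i p_{i,j,k} q₀(j))/f_opt for k = 1, …, L. Then for every integer t ≥ 1, E_t = Σ_{k=1}^{L} c_k (λ_k)^{t-1}, where λ_k = r_{k,k} are the diagonal entries (the eigenvalues) of R. -/
open Matrix Finset

section Aux

variable (r : ℕ → ℕ → ℝ)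

lemma pf_zero {i j k : ℕ} (h : k < i ∨ j < k) :
    powerFactor r i j k = 0 := by
  rw [powerFactor]; rw [dif_pos h]

lemma pf_lowzero {i j : ℕ} (k : ℕ) (h : j < i) : powerFactor r i j k = 0 :=
  pf_zero r (by omega)

lemma pf_diag (j : ℕ) : powerFactor r j j j = r j j := by
  rw [powerFactor]
  rw [dif_neg (by omega), dif_neg (by omega), dif_neg (by omega)]

lemma pf_mid {i j k : ℕ} (h1 : i ≤ k) (h2 : k < j) :
    powerFactor r i j k =
      (∑ l ∈ Finset.Icc k (j - 1), powerFactor r i l k * r l j) / (r k k - r j j) := by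
  rw [powerFactor]
  rw [dif_neg (by omega), dif_pos h2]
  rw [← Finset.sum_attach (Finset.Icc k (j-1)) (fun l => powerFactor r i l k * r l j)]

lemma pf_last {i j : ℕ} (h : i < j) :
    powerFactor r i j j =
      r i j - ∑ l ∈ Finset.Icc i (j - 1), powerFactor r i j l := by
  rw [powerFactor]
  rw [dif_neg (by omega), dif_neg (by omega), dif_pos h]
  rw [← Finset.sum_attach (Finset.Icc i (j-1)) (fun l => powerFactor r i j l)]

lemma pf_sum {i j : ℕ} (h : i ≤ j) :
    ∑ k ∈ Finset.Icc i j, powerFactor r i j k = r i j := by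
  rcases eq_or_lt_of_le h with rfl | hlt
  · simp [pf_diag]
  · obtain ⟨m, rfl⟩ : ∃ m, j = m + 1 := ⟨j - 1, by omega⟩
    rw [Finset.sum_Icc_succ_top (by omega : i ≤ m + 1), pf_last r hlt]
    simp

lemma fin_sum (L : ℕ) (g : ℕ → ℝ) :
    ∑ m : Fin L, g (m.1 + 1) = ∑ l ∈ Finset.Icc 1 L, g l := by
  rw [Fin.sum_univ_eq_sum_range (fun m => g (m + 1)),
    show Finset.Icc 1 L = Finset.Ico 1 (L+1) from (Finset.Ico_add_one_right_eq_Icc 1 L).symm,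
    Finset.sum_Ico_eq_sum_range]
  simp [add_comm]

lemma key (L : ℕ)
    (htri : ∀ i j, 1 ≤ i → i ≤ L → 1 ≤ j → j ≤ L → j < i → r i j = 0)
    (hdist : ∀ i j, 1 ≤ i → i ≤ L → 1 ≤ j → j ≤ L → i ≠ j → r i i ≠ r j j)
    {i j k : ℕ} (hi1 : 1 ≤ i) (hj1 : 1 ≤ j) (hjL : j ≤ L)
    (hk1 : 1 ≤ k) (hkL : k ≤ L) :
    ∑ l ∈ Finset.Icc 1 L, powerFactor r i l k * r l j
      = powerFactor r i j k * r k k := by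
  by_cases hk : i ≤ k ∧ k ≤ j
  · obtain ⟨hik, hkj⟩ := hk
    have hsub : Finset.Icc k j ⊆ Finset.Icc 1 L := by
      intro x hx; simp only [Finset.mem_Icc] at *; omega
    rw [← Finset.sum_subset hsub (fun x hx hxn => ?_)]
    swap
    · simp only [Finset.mem_Icc] at hx hxn
      rcases (by omega : x < k ∨ j < x) with h | h
      · rw [pf_zero r (Or.inr h), zero_mul]
      · rw [htri x j (by omega) hx.2 hj1 hjL h, mul_zero]
    rcases eq_or_lt_of_le hkj with rfl | hkj'
    · simp
    · obtain ⟨m, rfl⟩ : ∃ m, j = m + 1 := ⟨j - 1, by omega⟩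
      rw [Finset.sum_Icc_succ_top (by omega : k ≤ m + 1)]
      have hd : r k k - r (m+1) (m+1) ≠ 0 :=
        sub_ne_zero.mpr (hdist k (m+1) hk1 hkL hj1 hjL (by omega))
      have hp := pf_mid r hik hkj'
      rw [Nat.add_sub_cancel] at hp
      rw [hp]
      field_simp
      ring
  · have hcond : k < i ∨ j < k := by omega
    rw [pf_zero r hcond, zero_mul]
    apply Finset.sum_eq_zero
    intro l hl
    simp only [Finset.mem_Icc] at hl
    rcases hcond with h | h
    · rw [pf_zero r (Or.inl h), zero_mul]
    · rcases lt_or_ge l k with h2 | h2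
      · rw [pf_zero r (Or.inr h2), zero_mul]
      · rw [htri l j hl.1 hl.2 hj1 hjL (by omega), mul_zero]

end Aux

lemma pow_entry (L : ℕ) (r : ℕ → ℕ → ℝ)
    (htri : ∀ i j, 1 ≤ i → i ≤ L → 1 ≤ j → j ≤ L → j < i → r i j = 0)
    (hdist : ∀ i j, 1 ≤ i → i ≤ L → 1 ≤ j → j ≤ L → i ≠ j → r i i ≠ r j j)
    (R : Matrix (Fin L) (Fin L) ℝ)
    (hR : R = Matrix.of fun a b : Fin L => r (a.val + 1) (b.val + 1)) :
    ∀ t : ℕ, 1 ≤ t → ∀ a b : Fin L,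
      (R ^ t) a b = ∑ k ∈ Finset.Icc 1 L,
        powerFactor r (a.1 + 1) (b.1 + 1) k * (r k k) ^ (t - 1) := by
  intro t
  induction t with
  | zero => omega
  | succ t ih =>
    intro _ a b
    have haL : a.1 < L := a.isLt
    have hbL : b.1 < L := b.isLt
    by_cases ht : t = 0
    · subst ht
      simp only [zero_add, pow_one, Nat.sub_self, pow_zero, mul_one]
      rw [hR]
      simp only [Matrix.of_apply]
      by_cases h : a.1 ≤ b.1
      · rw [← pf_sum r (show a.1 + 1 ≤ b.1 + 1 by omega)]
        apply Finset.sum_subset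
        · intro x hx; simp only [Finset.mem_Icc] at *; omega
        · intro x hx hxn; simp only [Finset.mem_Icc] at hx hxn
          exact pf_zero r (by omega)
      · rw [htri _ _ (by omega) (by omega) (by omega) (by omega) (by omega)]
        symm; apply Finset.sum_eq_zero; intro k hk
        rw [pf_lowzero r k (by omega)]
    · have ht1 : 1 ≤ t := by omega
      obtain ⟨s, rfl⟩ : ∃ s, t = s + 1 := ⟨t - 1, by omega⟩
      rw [pow_succ, Matrix.mul_apply]
      simp only [ih ht1]
      simp only [hR, Matrix.of_apply, Nat.add_sub_cancel]
      have hstep : ∀ m : Fin L, (∑ k ∈ Finset.Icc 1 L,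
            powerFactor r (a.1+1) (m.1+1) k * r k k ^ s) * r (m.1+1) (b.1+1)
          = ∑ k ∈ Finset.Icc 1 L,
            (powerFactor r (a.1+1) (m.1+1) k * r (m.1+1) (b.1+1)) * r k k ^ s := by
        intro m; rw [Finset.sum_mul]; apply Finset.sum_congr rfl; intros; ring
      rw [Finset.sum_congr rfl (fun m _ => hstep m), Finset.sum_comm]
      apply Finset.sum_congr rfl
      intro k hk
      simp only [Finset.mem_Icc] at hk
      rw [← Finset.sum_mul,
        fin_sum L (fun l => powerFactor r (a.1+1) l k * r l (b.1+1)),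
        key r L htri hdist (by omega) (by omega) (by omega) hk.1 hk.2,
        pow_succ]
      ring


/-- Theorem 1: Let `R` be an `L × L` real non-singular upper
triangular matrix (entries `r i j`, indices `1, …, L`) with pairwise distinct
(nonzero) diagonal entries, `p = powerFactor r` its power factors, `e` and `q₀`
vectors in `ℝ^L`, `f_opt > 0`, `E t = (eᵀ R^t q₀)/f_opt` the relative
approximation error and `c k = (∑_{i=1}^{L} ∑_{j=i}^{L} e i * p i j k * q₀ j)/f_opt`.
Then for every `t ≥ 1`, `E t = ∑_{k=1}^{L} c k * (λ k)^(t-1)` where `λ k = r k k`. -/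
theorem relative_approximation_error_closed_form
    (L : ℕ) (hL : 1 ≤ L) (r : ℕ → ℕ → ℝ)
    (htri : ∀ i j, 1 ≤ i → i ≤ L → 1 ≤ j → j ≤ L → j < i → r i j = 0)
    (hnonsing : ∀ i, 1 ≤ i → i ≤ L → r i i ≠ 0)
    (hdist : ∀ i j, 1 ≤ i → i ≤ L → 1 ≤ j → j ≤ L → i ≠ j → r i i ≠ r j j)
    (R : Matrix (Fin L) (Fin L) ℝ)
    (hR : R = Matrix.of fun a b : Fin L => r (a.val + 1) (b.val + 1))
    (e q₀ : ℕ → ℝ) (fopt : ℝ) (hfopt : 0 < fopt)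
    (E : ℕ → ℝ)
    (hE : ∀ t : ℕ, E t =
      ((fun a : Fin L => e (a.val + 1)) ⬝ᵥ
        ((R ^ t) *ᵥ fun a : Fin L => q₀ (a.val + 1))) / fopt)
    (c : ℕ → ℝ)
    (hc : ∀ k, c k =
      (∑ i ∈ Finset.Icc 1 L, ∑ j ∈ Finset.Icc i L,
        e i * powerFactor r i j k * q₀ j) / fopt) :
    ∀ t : ℕ, 1 ≤ t →
      E t = ∑ k ∈ Finset.Icc 1 L, c k * (r k k) ^ (t - 1) := by
  intro t ht
  rw [hE t]
  simp only [dotProduct, Matrix.mulVec, hc]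
  simp only [pow_entry L r htri hdist R hR t ht]
  -- turn RHS into a single sum over a common denominator
  have hrhs : ∀ k, (∑ i ∈ Finset.Icc 1 L, ∑ j ∈ Finset.Icc i L,
        e i * powerFactor r i j k * q₀ j) / fopt * r k k ^ (t - 1)
      = ((∑ i ∈ Finset.Icc 1 L, ∑ j ∈ Finset.Icc 1 L,
        e i * powerFactor r i j k * q₀ j) * r k k ^ (t - 1)) / fopt := by
    intro k
    rw [div_mul_eq_mul_div]
    congr 2
    apply Finset.sum_congr rfl
    intro i hi
    simp only [Finset.mem_Icc] at hi
    apply Finset.sum_subset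
    · intro x hx; simp only [Finset.mem_Icc] at *; omega
    · intro x hx hxn; simp only [Finset.mem_Icc] at hx hxn
      rw [pf_lowzero r _ (by omega), mul_zero, zero_mul]
  simp only [hrhs]
  rw [← Finset.sum_div]
  congr 1
  -- convert Fin-sums to Icc-sums
  have h1 : ∀ a : Fin L,
      ∑ b : Fin L, (∑ k ∈ Finset.Icc 1 L,
          powerFactor r (a.1+1) (b.1+1) k * r k k ^ (t-1)) * q₀ (b.1+1)
        = ∑ j ∈ Finset.Icc 1 L, (∑ k ∈ Finset.Icc 1 L,
          powerFactor r (a.1+1) j k * r k k ^ (t-1)) * q₀ j :=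
    fun a => fin_sum L (fun j => (∑ k ∈ Finset.Icc 1 L,
          powerFactor r (a.1+1) j k * r k k ^ (t-1)) * q₀ j)
  simp only [h1]
  rw [fin_sum L (fun i => e i * ∑ j ∈ Finset.Icc 1 L, (∑ k ∈ Finset.Icc 1 L,
          powerFactor r i j k * r k k ^ (t-1)) * q₀ j)]
  -- now pure triple-sum rearrangement
  simp only [Finset.mul_sum, Finset.sum_mul]
  symm
  rw [Finset.sum_comm]
  apply Finset.sum_congr rfl
  intro i _
  rw [Finset.sum_comm]
  apply Finset.sum_congr rfl
  intro j _
  apply Finset.sum_congr rfl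
  intro k _
  ring
end

section
/- Let R be the 4×4 real matrix with rows (3/4, 1/2, 0, 0), (0, 1/2, 3/4, 0), (0, 0, 1/4, 1), (0, 0, 0, 0), let e = (1, 2, 3, 4)ᵀ and q₀ = (0, 0, 0, 1)ᵀ. Then for every integer t ≥ 0, the relative approximation error E_t := (eᵀ R^t q₀)/4 equals (3/4)^t. -/
open Matrix

/-- for the (1+1) elitist EA with onebit mutation on OneMax
with `n = 4`, starting from `0000`, the relative approximation error is
`E_t = (eᵀ R^t q₀)/4 = (3/4)^t` for every `t ≥ 0`. -/
theorem onemax_relative_approximation_error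
    (R : Matrix (Fin 4) (Fin 4) ℝ)
    (hR : R = !![3/4, 1/2, 0, 0;
                 0, 1/2, 3/4, 0;
                 0, 0, 1/4, 1;
                 0, 0, 0, 0])
    (e q₀ : Fin 4 → ℝ)
    (he : e = ![1, 2, 3, 4]) (hq₀ : q₀ = ![0, 0, 0, 1]) :
    ∀ t : ℕ, (e ⬝ᵥ ((R ^ t) *ᵥ q₀)) / 4 = (3/4 : ℝ) ^ t := by
  have hvec : e ᵥ* R = (3/4 : ℝ) • e := by
    subst hR he
    funext i
    fin_cases i <;>
      simp [vecMul, dotProduct, Fin.sum_univ_succ] <;> norm_num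
  intro t
  induction t with
  | zero =>
      subst he hq₀
      simp [dotProduct, Fin.sum_univ_succ]
  | succ n ih =>
      have : e ⬝ᵥ ((R ^ (n + 1)) *ᵥ q₀) = (3/4 : ℝ) * (e ⬝ᵥ ((R ^ n) *ᵥ q₀)) := by
        rw [pow_succ', ← Matrix.mulVec_mulVec, Matrix.dotProduct_mulVec, hvec,
          smul_dotProduct, smul_eq_mul]
      rw [this, pow_succ', mul_div_assoc, ih]
end

section
/- Let E_t := [3 ln(5/4) · (3/4)^{t-1} + (3 ln(5/3) − 6 ln(5/4)) · (1/2)^{t-1} + (3 ln(5/4) − 3 ln(5/3) + ln(5/2)) · (1/4)^{t-1}] / ln 5 for integers t ≥ 1. Then E_t > 0 for all t ≥ 1, and the average convergence rate R_t := 1 − (E_t)^{1/t} converges to 1/4 as t → ∞. -/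
open Filter

private lemma hA' : 0 < Real.log (5/4) := Real.log_pos (by norm_num)

private lemma hB' : 0 < 3 * Real.log (5/3) - 6 * Real.log (5/4) := by
  have h : Real.log ((5/4 : ℝ) ^ (6:ℕ)) < Real.log ((5/3 : ℝ) ^ (3:ℕ)) := by
    apply Real.log_lt_log (by positivity)
    norm_num
  rw [Real.log_pow, Real.log_pow] at h
  push_cast at h
  linarith

private lemma hC' : 0 < 3 * Real.log (5/4) - 3 * Real.log (5/3) + Real.log (5/2) := by
  have h : Real.log ((5/3 : ℝ) ^ (3:ℕ)) < Real.log ((5/4 : ℝ) ^ (3:ℕ) * (5/2)) := by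
    apply Real.log_lt_log (by positivity)
    norm_num
  rw [Real.log_pow, Real.log_mul (by positivity) (by norm_num), Real.log_pow] at h
  push_cast at h
  linarith

private lemma hlog5 : 0 < Real.log 5 := Real.log_pos (by norm_num)

/-- for the (1+1) elitist EA with onebit mutation maximizing
the logarithmic function `ln(|x|+1)` with `n = 4`, starting from `0000`, the
relative approximation error
`E t = (3 ln(5/4) (3/4)^(t-1) + (3 ln(5/3) − 6 ln(5/4)) (1/2)^(t-1)
  + (3 ln(5/4) − 3 ln(5/3) + ln(5/2)) (1/4)^(t-1)) / ln 5`
is positive for all `t ≥ 1`, and the average convergence rate `1 − (E t)^(1/t)`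
converges to `1/4` as `t → ∞`. -/
theorem log_average_convergence_rate_limit
    (E : ℕ → ℝ)
    (hE : ∀ t : ℕ, 1 ≤ t →
      E t = (3 * Real.log (5/4) * (3/4 : ℝ) ^ (t - 1)
          + (3 * Real.log (5/3) - 6 * Real.log (5/4)) * (1/2 : ℝ) ^ (t - 1)
          + (3 * Real.log (5/4) - 3 * Real.log (5/3) + Real.log (5/2))
              * (1/4 : ℝ) ^ (t - 1)) / Real.log 5) :
    (∀ t : ℕ, 1 ≤ t → 0 < E t) ∧
      Tendsto (fun t : ℕ => 1 - (E t) ^ ((1 : ℝ) / t)) atTop (nhds (1/4 : ℝ)) := by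
  set A : ℝ := 3 * Real.log (5/4) with hAdef
  set B : ℝ := 3 * Real.log (5/3) - 6 * Real.log (5/4) with hBdef
  set C : ℝ := 3 * Real.log (5/4) - 3 * Real.log (5/3) + Real.log (5/2) with hCdef
  have hA : 0 < A := by have := hA'; positivity
  have hB : 0 < B := hB'
  have hC : 0 < C := hC'
  -- auxiliary function
  set g : ℕ → ℝ := fun k => (A + B * (2/3 : ℝ) ^ k + C * (1/3 : ℝ) ^ k) / Real.log 5
    with hgdef
  have hgpos : ∀ k : ℕ, 0 < g k := by
    intro k
    have := hlog5
    have h2 : (0:ℝ) < (2/3 : ℝ) ^ k := by positivity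
    have h3 : (0:ℝ) < (1/3 : ℝ) ^ k := by positivity
    apply div_pos (by positivity) hlog5
  have hEg : ∀ t : ℕ, 1 ≤ t → E t = (3/4 : ℝ) ^ (t - 1) * g (t - 1) := by
    intro t ht
    rw [hE t ht, hgdef]
    have e1 : (1/2 : ℝ) ^ (t-1) = (3/4 : ℝ) ^ (t-1) * (2/3 : ℝ) ^ (t-1) := by
      rw [← mul_pow]; norm_num
    have e2 : (1/4 : ℝ) ^ (t-1) = (3/4 : ℝ) ^ (t-1) * (1/3 : ℝ) ^ (t-1) := by
      rw [← mul_pow]; norm_num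
    rw [e1, e2]
    ring
  have hEpos : ∀ t : ℕ, 1 ≤ t → 0 < E t := by
    intro t ht
    rw [hEg t ht]
    exact mul_pos (by positivity) (hgpos _)
  refine ⟨hEpos, ?_⟩
  -- limit of g
  have hgl : Tendsto g atTop (nhds (A / Real.log 5)) := by
    have h2 : Tendsto (fun k : ℕ => (2/3 : ℝ) ^ k) atTop (nhds 0) :=
      tendsto_pow_atTop_nhds_zero_of_lt_one (by norm_num) (by norm_num)
    have h3 : Tendsto (fun k : ℕ => (1/3 : ℝ) ^ k) atTop (nhds 0) :=
      tendsto_pow_atTop_nhds_zero_of_lt_one (by norm_num) (by norm_num)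
    have : Tendsto (fun k : ℕ => A + B * (2/3 : ℝ) ^ k + C * (1/3 : ℝ) ^ k) atTop
        (nhds (A + B * 0 + C * 0)) :=
      ((tendsto_const_nhds.add (h2.const_mul B)).add (h3.const_mul C))
    have h := this.div_const (Real.log 5)
    simp only [mul_zero, add_zero] at h
    exact h
  have hL : 0 < A / Real.log 5 := div_pos hA hlog5
  -- log of g composed with t-1
  have hsub : Tendsto (fun t : ℕ => t - 1) atTop atTop :=
    tendsto_sub_atTop_nat 1
  have hloggl : Tendsto (fun t : ℕ => Real.log (g (t - 1))) atTop
      (nhds (Real.log (A / Real.log 5))) :=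
    ((Real.continuousAt_log (ne_of_gt hL)).tendsto.comp (hgl.comp hsub))
  have hinv : Tendsto (fun t : ℕ => (1 : ℝ) / t) atTop (nhds 0) :=
    tendsto_one_div_atTop_nhds_zero_nat
  -- main exponent limit
  have hexp : Tendsto (fun t : ℕ => Real.log (E t) * ((1:ℝ)/t)) atTop
      (nhds (Real.log (3/4))) := by
    have h1 : Tendsto (fun t : ℕ => (1 - (1:ℝ)/t) * Real.log (3/4)) atTop
        (nhds (Real.log (3/4))) := by
      have hs1 : Tendsto (fun t : ℕ => 1 - (1:ℝ)/t) atTop (nhds 1) := by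
        simpa using (tendsto_const_nhds (α := ℕ) (x := (1:ℝ)) (f := atTop)).sub hinv
      simpa using hs1.mul_const (Real.log (3/4))
    have h2 : Tendsto (fun t : ℕ => ((1:ℝ)/t) * Real.log (g (t-1))) atTop (nhds 0) := by
      have := hinv.mul hloggl
      simpa using this
    have h3 : Tendsto (fun t : ℕ =>
        (1 - (1:ℝ)/t) * Real.log (3/4) + ((1:ℝ)/t) * Real.log (g (t-1))) atTop
        (nhds (Real.log (3/4))) := by
      have := h1.add h2
      simpa using this
    apply h3.congr'
    filter_upwards [eventually_ge_atTop 1] with t ht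
    have ht0 : (t:ℝ) ≠ 0 := Nat.cast_ne_zero.mpr (by omega)
    have hcast : ((t - 1 : ℕ) : ℝ) = (t:ℝ) - 1 := by
      push_cast [Nat.cast_sub ht]; ring
    rw [hEg t ht, Real.log_mul (by positivity) (ne_of_gt (hgpos _)), Real.log_pow, hcast]
    field_simp
  -- conclude
  have hrp : Tendsto (fun t : ℕ => (E t) ^ ((1:ℝ)/t)) atTop (nhds (3/4 : ℝ)) := by
    have hcomp : Tendsto (fun t : ℕ => Real.exp (Real.log (E t) * ((1:ℝ)/t))) atTop
        (nhds (Real.exp (Real.log (3/4)))) := Real.continuous_exp.continuousAt.tendsto.comp hexp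
    rw [Real.exp_log (by norm_num)] at hcomp
    apply hcomp.congr'
    filter_upwards [eventually_ge_atTop 1] with t ht
    rw [Real.rpow_def_of_pos (hEpos t ht)]
  convert hrp.const_sub (1:ℝ) using 2
  norm_num
end
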